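/- Let Z = ∂/∂z + i z̄ ∂/∂u and let c > 0 be a constant. For (z,u) ≠ (0,0), the function G(z,u) = c·(|z|⁴ + u²)^{−1/2} satisfies Z Z (log G) − 2 (Z log G)² = 0. -/

import Mathlib

open Complex

/-- The CR vector field Z = ∂/∂z + i z̄ ∂/∂u on the Heisenberg group ℂ × ℝ,
where ∂/∂z = ½(∂/∂x − i ∂/∂y) is the Wirtinger derivative. -/
noncomputable def Zop (f : ℂ × ℝ → ℂ) : ℂ × ℝ → ℂ := fun p =>
  (1 / 2 : ℂ) * (fderiv ℝ f p (1, 0) - Complex.I * fderiv ℝ f p (Complex.I, 0))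
    + Complex.I * (starRingEnd ℂ p.1) * fderiv ℝ f p (0, 1)

/-- The CR vector field Z̄ = ∂/∂z̄ − i z ∂/∂u on the Heisenberg group ℂ × ℝ,
where ∂/∂z̄ = ½(∂/∂x + i ∂/∂y). -/
noncomputable def Zbar (f : ℂ × ℝ → ℂ) : ℂ × ℝ → ℂ := fun p =>
  (1 / 2 : ℂ) * (fderiv ℝ f p (1, 0) + Complex.I * fderiv ℝ f p (Complex.I, 0))
    - Complex.I * p.1 * fderiv ℝ f p (0, 1)

/-- The vector field T = ∂/∂u. -/
noncomputable def Tder (f : ℂ × ℝ → ℂ) : ℂ × ℝ → ℂ := fun p => fderiv ℝ f p (0, 1)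

/-- The sublaplacian Δ_b = Z Z̄ + Z̄ Z. -/
noncomputable def Lapb (f : ℂ × ℝ → ℂ) : ℂ × ℝ → ℂ := fun p =>
  Zop (Zbar f) p + Zbar (Zop f) p

noncomputable def Phi (q : ℂ × ℝ) : ℂ := q.1 * (starRingEnd ℂ q.1) - Complex.I * q.2

lemma Phi_re (q : ℂ × ℝ) : (Phi q).re = Complex.normSq q.1 := by
  simp [Phi, Complex.mul_re, Complex.mul_im, Complex.normSq_apply]

lemma Phi_im (q : ℂ × ℝ) : (Phi q).im = -q.2 := by
  simp [Phi, Complex.mul_re, Complex.mul_im]; ring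

lemma Phi_ne {q : ℂ × ℝ} (hq : q ≠ 0) : Phi q ≠ 0 := by
  intro h
  apply hq
  have hre := Phi_re q; have him := Phi_im q
  rw [h] at hre him
  simp at hre him
  ext
  · exact (Complex.normSq_eq_zero.mp hre.symm) ▸ rfl
  · simpa using him.symm.symm

lemma normSq_Phi (q : ℂ × ℝ) : Complex.normSq (Phi q) = ‖q.1‖ ^ 4 + q.2 ^ 2 := by
  rw [Complex.normSq_apply, Phi_re, Phi_im]
  rw [show ‖q.1‖ ^ 4 = Complex.normSq q.1 ^ 2 by rw [← Complex.sq_norm]; ring]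
  ring

noncomputable def LPhi (q : ℂ × ℝ) : (ℂ × ℝ) →L[ℝ] ℂ :=
  q.1 • (Complex.conjCLE.toContinuousLinearMap.comp (ContinuousLinearMap.fst ℝ ℂ ℝ))
  + (starRingEnd ℂ q.1) • (ContinuousLinearMap.fst ℝ ℂ ℝ)
  - Complex.I • (Complex.ofRealCLM.comp (ContinuousLinearMap.snd ℝ ℂ ℝ))

lemma hasFDerivAt_Phi (q : ℂ × ℝ) : HasFDerivAt Phi (LPhi q) q := by
  have hz : HasFDerivAt (fun r : ℂ×ℝ => r.1) (ContinuousLinearMap.fst ℝ ℂ ℝ) q := hasFDerivAt_fst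
  have hcz : HasFDerivAt (fun r : ℂ×ℝ => (starRingEnd ℂ) r.1)
      (Complex.conjCLE.toContinuousLinearMap.comp (ContinuousLinearMap.fst ℝ ℂ ℝ)) q :=
    (Complex.conjCLE.toContinuousLinearMap.comp (ContinuousLinearMap.fst ℝ ℂ ℝ)).hasFDerivAt
  have hu : HasFDerivAt (fun r : ℂ×ℝ => ((r.2 : ℝ) : ℂ))
      (Complex.ofRealCLM.comp (ContinuousLinearMap.snd ℝ ℂ ℝ)) q :=
    (Complex.ofRealCLM.comp (ContinuousLinearMap.snd ℝ ℂ ℝ)).hasFDerivAt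
  have h := (hz.mul hcz).sub (hu.const_mul Complex.I)
  exact h

lemma Zop_logG (c : ℝ) (hc : 0 < c) (q : ℂ × ℝ) (hq : q ≠ 0) :
    Zop (fun r => ((Real.log (c * (‖r.1‖ ^ 4 + r.2 ^ 2) ^ (-(1 : ℝ) / 2)) : ℝ) : ℂ)) q
      = -(starRingEnd ℂ q.1) / Phi q := by
  have hPhine := Phi_ne hq
  have hNpos : 0 < Complex.normSq (Phi q) := Complex.normSq_pos.mpr hPhine
  -- eventual equality
  set g2 : ℂ × ℝ → ℂ := fun r =>
    ((Real.log c + (-(1:ℝ)/2) * Real.log (Complex.normSq (Phi r)) : ℝ) : ℂ) with hg2def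
  have hev : (fun r : ℂ×ℝ => ((Real.log (c * (‖r.1‖ ^ 4 + r.2 ^ 2) ^ (-(1 : ℝ) / 2)) : ℝ) : ℂ))
      =ᶠ[nhds q] g2 := by
    filter_upwards [isOpen_compl_singleton.mem_nhds hq] with r hr
    have hrne : r ≠ 0 := hr
    have hNr : 0 < Complex.normSq (Phi r) := Complex.normSq_pos.mpr (Phi_ne hrne)
    rw [hg2def]
    norm_cast
    rw [← normSq_Phi, Real.log_mul (ne_of_gt hc) (ne_of_gt (Real.rpow_pos_of_pos hNr _)),
      Real.log_rpow hNr]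
    try ring
  -- derivative of g2
  have hPhi := hasFDerivAt_Phi q
  have hconjPhi : HasFDerivAt (fun r => (starRingEnd ℂ) (Phi r))
      (Complex.conjCLE.toContinuousLinearMap.comp (LPhi q)) q :=
    Complex.conjCLE.toContinuousLinearMap.hasFDerivAt.comp q hPhi
  have hM := hPhi.mul hconjPhi
  have hN : HasFDerivAt (fun r => Complex.normSq (Phi r))
      (Complex.reCLM.comp ((Phi q) • (Complex.conjCLE.toContinuousLinearMap.comp (LPhi q))
        + ((starRingEnd ℂ) (Phi q)) • (LPhi q))) q := by
    have := Complex.reCLM.hasFDerivAt.comp q hM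
    refine this.congr_of_eventuallyEq (Filter.Eventually.of_forall fun r => ?_)
    simp [Complex.mul_conj]
  have hlog := hN.log (ne_of_gt hNpos)
  have hg2 : HasFDerivAt g2 (Complex.ofRealCLM.comp
      ((-(1:ℝ)/2) • ((Complex.normSq (Phi q))⁻¹ •
        (Complex.reCLM.comp ((Phi q) • (Complex.conjCLE.toContinuousLinearMap.comp (LPhi q))
        + ((starRingEnd ℂ) (Phi q)) • (LPhi q)))))) q := by
    exact Complex.ofRealCLM.hasFDerivAt.comp q ((hlog.const_mul ((-(1:ℝ)/2))).const_add (Real.log c))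
  unfold Zop
  rw [hev.fderiv_eq, hg2.fderiv]
  simp only [ContinuousLinearMap.coe_comp', Function.comp_apply, ContinuousLinearMap.coe_smul',
    Pi.smul_apply, ContinuousLinearMap.add_apply, ContinuousLinearMap.coe_sub',
    Pi.sub_apply, ContinuousLinearMap.coe_fst', ContinuousLinearMap.coe_snd',
    ContinuousLinearEquiv.coe_coe, Complex.conjCLE_apply, Complex.reCLM_apply,
    Complex.ofRealCLM_apply, LPhi, smul_eq_mul, Complex.real_smul]
  have hre : ∀ a : ℂ, ((a.re : ℝ) : ℂ) = (a + (starRingEnd ℂ) a) / 2 := by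
    intro a; rw [Complex.add_conj]; push_cast; ring
  have hcPhine : (starRingEnd ℂ) (Phi q) ≠ 0 := by
    simpa using hPhine
  push_cast
  simp only [map_one, map_zero, Complex.conj_I, mul_one, mul_zero, zero_mul, sub_zero, zero_sub]
  simp only [hre]
  simp only [map_add, map_sub, map_mul, Complex.conj_conj, Complex.conj_I, Complex.conj_ofReal,
    map_neg]
  rw [show ((Complex.normSq (Phi q) : ℝ) : ℂ) = Phi q * (starRingEnd ℂ) (Phi q) from
    (Complex.mul_conj _).symm]
  field_simp
  ring_nf
  simp [Complex.I_sq]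
  field_simp
  ring

lemma Zop_h (p : ℂ × ℝ) (hp : p ≠ 0) :
    Zop (fun q => -(starRingEnd ℂ q.1) / Phi q) p
      = 2 * ((starRingEnd ℂ p.1) ^ 2 / (Phi p) ^ 2) := by
  have hPhine := Phi_ne hp
  have hcz : HasFDerivAt (fun r : ℂ×ℝ => (starRingEnd ℂ) r.1)
      (Complex.conjCLE.toContinuousLinearMap.comp (ContinuousLinearMap.fst ℝ ℂ ℝ)) p :=
    (Complex.conjCLE.toContinuousLinearMap.comp (ContinuousLinearMap.fst ℝ ℂ ℝ)).hasFDerivAt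
  have hinv : HasFDerivAt (fun r : ℂ×ℝ => (Phi r)⁻¹)
      ((-((Phi p) ^ 2)⁻¹) • LPhi p) p :=
    (hasDerivAt_inv hPhine).comp_hasFDerivAt p (hasFDerivAt_Phi p)
  have hh : HasFDerivAt (fun q : ℂ×ℝ => -(starRingEnd ℂ q.1) / Phi q)
      ((-(starRingEnd ℂ p.1)) • ((-((Phi p) ^ 2)⁻¹) • LPhi p)
        + (Phi p)⁻¹ • (-(Complex.conjCLE.toContinuousLinearMap.comp (ContinuousLinearMap.fst ℝ ℂ ℝ)))) p := by
    have := (hcz.neg).mul hinv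
    simp only [div_eq_mul_inv]
    exact this
  unfold Zop
  rw [hh.fderiv]
  simp only [ContinuousLinearMap.coe_comp', Function.comp_apply, ContinuousLinearMap.coe_smul',
    Pi.smul_apply, ContinuousLinearMap.add_apply, ContinuousLinearMap.coe_sub',
    Pi.sub_apply, ContinuousLinearMap.coe_fst', ContinuousLinearMap.coe_snd',
    ContinuousLinearEquiv.coe_coe, Complex.conjCLE_apply, Complex.reCLM_apply,
    Complex.ofRealCLM_apply, LPhi, smul_eq_mul, Complex.real_smul,
    ContinuousLinearMap.neg_apply]
  simp only [map_one, map_zero, Complex.conj_I, mul_one, mul_zero, zero_mul, sub_zero, zero_sub]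
  push_cast
  field_simp
  ring_nf
  simp [Complex.I_sq]
  ring_nf


lemma Zop_congr {f g : ℂ × ℝ → ℂ} {p : ℂ × ℝ} (h : f =ᶠ[nhds p] g) : Zop f p = Zop g p := by
  unfold Zop; rw [h.fderiv_eq]

/-- For G = c ρ^{-2}, c > 0, away from the origin: Z Z (log G) − 2 (Z log G)² = 0. -/
theorem torsion_identity_green (c : ℝ) (hc : 0 < c) (p : ℂ × ℝ) (hp : p ≠ 0) :
    Zop (Zop (fun q =>
        ((Real.log (c * (‖q.1‖ ^ 4 + q.2 ^ 2) ^ (-(1 : ℝ) / 2)) : ℝ) : ℂ))) p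
      - 2 * (Zop (fun q =>
        ((Real.log (c * (‖q.1‖ ^ 4 + q.2 ^ 2) ^ (-(1 : ℝ) / 2)) : ℝ) : ℂ)) p) ^ 2
      = 0 := by
  have hev : Zop (fun q =>
        ((Real.log (c * (‖q.1‖ ^ 4 + q.2 ^ 2) ^ (-(1 : ℝ) / 2)) : ℝ) : ℂ))
      =ᶠ[nhds p] (fun q => -(starRingEnd ℂ q.1) / Phi q) := by
    filter_upwards [isOpen_compl_singleton.mem_nhds hp] with r hr
    exact Zop_logG c hc r hr
  rw [Zop_congr hev, Zop_h p hp, Zop_logG c hc p hp]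
  have hPhine := Phi_ne hp
  field_simp
  ring
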